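/- Consider the scalar network game Jacobian ∇F(x) = D(x) + K(x)G where D(x), K(x) are diagonal N×N matrices with D^h(x) ≥ κ₁ > 0, 0 < ν ≤ K^h(x) ≤ κ₂ for all x, and G = Gᵀ is non-negative with zero diagonal. If κ₁ − κ₂|λ_min(G)| > 0, then for every x the matrix H_x := K(x)^{-1} satisfies H_x ∇F(x) ⪰ ((κ₁/κ₂) + λ_min(G)) I ≻ 0; in particular ∇F(x) is a P-matrix for every x. -/

import Mathlib

open Matrix

lemma aux_psd {n : Type*} [Fintype n] [DecidableEq n] (G : Matrix n n ℝ) (hG : G.IsHermitian)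
    (c : ℝ) (hc : ∀ i, c ≤ hG.eigenvalues i) :
    (G - c • (1 : Matrix n n ℝ)).PosSemidef := by
  refine Matrix.posSemidef_iff_dotProduct_mulVec.mpr ⟨?_, ?_⟩
  · exact hG.sub (by simp [Matrix.IsHermitian])
  · intro v
    set U : Matrix n n ℝ := (hG.eigenvectorUnitary : Matrix n n ℝ) with hU
    set w : n → ℝ := star U *ᵥ v with hw
    have hUU : U * star U = 1 := (Matrix.mem_unitaryGroup_iff).mp hG.eigenvectorUnitary.2
    have hsU : star U = Uᵀ := by
      simp [star_eq_conjTranspose, conjTranspose_eq_transpose_of_trivial]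
    have hdot : ∀ z : n → ℝ, star v ⬝ᵥ (U *ᵥ z) = w ⬝ᵥ z := by
      intro z
      rw [dotProduct_mulVec, hw]
      congr 1
      simp [hsU, mulVec_transpose]
    have hkey : star v ⬝ᵥ (G *ᵥ v) = ∑ i, hG.eigenvalues i * (w i)^2 := by
      conv_lhs => rw [hG.spectral_theorem, Unitary.conjStarAlgAut_apply, ← mulVec_mulVec, ← mulVec_mulVec, hdot]
      rw [← hw]
      simp [dotProduct, mulVec_diagonal, Function.comp, mul_comm, sq, mul_assoc, mul_left_comm]
    have hnorm : star v ⬝ᵥ v = ∑ i, (w i)^2 := by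
      have h1 : w ⬝ᵥ w = star v ⬝ᵥ v :=
        calc w ⬝ᵥ w = w ⬝ᵥ (star U *ᵥ v) := by rw [← hw]
          _ = (w ᵥ* star U) ⬝ᵥ v := dotProduct_mulVec _ _ _
          _ = (U *ᵥ w) ⬝ᵥ v := by rw [hsU, vecMul_transpose]
          _ = ((U * star U) *ᵥ v) ⬝ᵥ v := by rw [hw, mulVec_mulVec]
          _ = star v ⬝ᵥ v := by rw [hUU, one_mulVec]; simp
      rw [← h1]
      simp [dotProduct, sq]
    rw [sub_mulVec, dotProduct_sub, smul_mulVec, one_mulVec, dotProduct_smul, hkey,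
      smul_eq_mul, hnorm, Finset.mul_sum, ← Finset.sum_sub_distrib]
    apply Finset.sum_nonneg
    intro i _
    rw [← sub_mul]
    exact mul_nonneg (by linarith [hc i]) (sq_nonneg _)

lemma aux_trace {n : Type*} [Fintype n] [DecidableEq n] (G : Matrix n n ℝ) (hG : G.IsHermitian) :
    ∑ i, hG.eigenvalues i = G.trace := by
  conv_rhs => rw [hG.spectral_theorem, Unitary.conjStarAlgAut_apply]
  rw [Matrix.trace_mul_comm, ← mul_assoc,
    (Matrix.mem_unitaryGroup_iff').mp hG.eigenvectorUnitary.2, one_mul, trace_diagonal]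
  simp

/-- A real square matrix is a P-matrix if all its principal minors are positive. -/
def IsPMatrix {m : Type*} [Fintype m] [DecidableEq m] (M : Matrix m m ℝ) : Prop :=
  ∀ S : Finset m, 0 < (M.submatrix (Subtype.val : {i // i ∈ S} → m) Subtype.val).det

/-- For a scalar network game Jacobian `∇F(x) = D(x) + K(x)G` with
`D(x), K(x)` diagonal, `D^h(x) ≥ κ₁ > 0`, `0 < ν ≤ K^h(x) ≤ κ₂`, `G = Gᵀ`
non-negative with zero diagonal, and `κ₁ - κ₂|λ_min(G)| > 0`:
for every `x`, with `H_x := K(x)⁻¹`, one has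
`H_x ∇F(x) ⪰ ((κ₁/κ₂) + λ_min(G)) I ≻ 0`, and `∇F(x)` is a P-matrix. -/
theorem stmt13 (N : ℕ) (hN : 0 < N)
    (G : Matrix (Fin N) (Fin N) ℝ) (hGsym : G.IsHermitian)
    (hGnn : ∀ i j, 0 ≤ G i j) (hGd : ∀ i, G i i = 0)
    (κ₁ κ₂ ν : ℝ) (hν : 0 < ν) (hκ₁ : 0 < κ₁)
    (D K : (Fin N → ℝ) → (Fin N → ℝ))
    (hD : ∀ x h, κ₁ ≤ D x h)
    (hKl : ∀ x h, ν ≤ K x h) (hKu : ∀ x h, K x h ≤ κ₂)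
    (hcond : 0 < κ₁ - κ₂ *
      |Finset.univ.inf' (Finset.univ_nonempty_iff.mpr ⟨⟨0, hN⟩⟩) hGsym.eigenvalues|) :
    ∀ x : Fin N → ℝ,
      (Matrix.diagonal (fun h => (K x h)⁻¹) *
          (Matrix.diagonal (D x) + Matrix.diagonal (K x) * G) -
        (κ₁ / κ₂ + Finset.univ.inf' (Finset.univ_nonempty_iff.mpr ⟨⟨0, hN⟩⟩)
            hGsym.eigenvalues) • (1 : Matrix (Fin N) (Fin N) ℝ)).PosSemidef ∧
      0 < κ₁ / κ₂ + Finset.univ.inf' (Finset.univ_nonempty_iff.mpr ⟨⟨0, hN⟩⟩)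
            hGsym.eigenvalues ∧
      IsPMatrix (Matrix.diagonal (D x) + Matrix.diagonal (K x) * G) := by
  set lam : ℝ := Finset.univ.inf' (Finset.univ_nonempty_iff.mpr ⟨⟨0, hN⟩⟩) hGsym.eigenvalues
    with hlam
  have hlamle : ∀ i, lam ≤ hGsym.eigenvalues i := fun i =>
    Finset.inf'_le _ (Finset.mem_univ i)
  have hsum : ∑ i, hGsym.eigenvalues i = 0 := by
    rw [aux_trace]
    simp [Matrix.trace, Matrix.diag, hGd]
  have hlam0 : lam ≤ 0 := by
    by_contra hpos
    push_neg at hpos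
    have : (0 : ℝ) < ∑ i, hGsym.eigenvalues i :=
      Finset.sum_pos (fun i _ => lt_of_lt_of_le hpos (hlamle i))
        (Finset.univ_nonempty_iff.mpr ⟨⟨0, hN⟩⟩)
    linarith
  have hκ₂ : 0 < κ₂ := lt_of_lt_of_le hν (le_trans (hKl 0 ⟨0, hN⟩) (hKu 0 ⟨0, hN⟩))
  rw [abs_of_nonpos hlam0] at hcond
  have hc : 0 < κ₁ / κ₂ + lam := by
    have heq : κ₁ / κ₂ + lam = (κ₁ + κ₂ * lam) / κ₂ := by field_simp
    rw [heq]
    apply div_pos (by linarith) hκ₂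
  set c : ℝ := κ₁ / κ₂ + lam with hcdef
  intro x
  have hKpos : ∀ h, 0 < K x h := fun h => lt_of_lt_of_le hν (hKl x h)
  set M : Matrix (Fin N) (Fin N) ℝ :=
    Matrix.diagonal (fun h => (K x h)⁻¹ * D x h) + G with hM
  have hred : Matrix.diagonal (fun h => (K x h)⁻¹) *
      (Matrix.diagonal (D x) + Matrix.diagonal (K x) * G) = M := by
    rw [hM, mul_add, diagonal_mul_diagonal, ← mul_assoc, diagonal_mul_diagonal]
    congr 1
    have h1 : (fun h => (K x h)⁻¹ * K x h) = fun _ => (1 : ℝ) :=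
      funext fun h => inv_mul_cancel₀ (ne_of_gt (hKpos h))
    rw [h1, diagonal_one, one_mul]
  have hsplit : M - c • (1 : Matrix (Fin N) (Fin N) ℝ) =
      Matrix.diagonal (fun h => (K x h)⁻¹ * D x h - κ₁ / κ₂) +
        (G - lam • (1 : Matrix (Fin N) (Fin N) ℝ)) := by
    ext i j
    by_cases hij : i = j <;>
      simp [hM, hij, Matrix.sub_apply, Matrix.add_apply, Matrix.smul_apply, Matrix.one_apply,
        Matrix.diagonal, hcdef] <;> ring
  have psd1 : (Matrix.diagonal (fun h => (K x h)⁻¹ * D x h - κ₁ / κ₂)).PosSemidef := by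
    apply Matrix.PosSemidef.diagonal
    intro h
    have : κ₁ / κ₂ ≤ D x h / K x h :=
      div_le_div₀ (le_trans hκ₁.le (hD x h)) (hD x h) (hKpos h) (hKu x h)
    simp only [Pi.zero_apply, sub_nonneg, inv_mul_eq_div]
    exact this
  have psd2 : (G - lam • (1 : Matrix (Fin N) (Fin N) ℝ)).PosSemidef :=
    aux_psd G hGsym lam hlamle
  have psdM : (M - c • (1 : Matrix (Fin N) (Fin N) ℝ)).PosSemidef := by
    rw [hsplit]; exact psd1.add psd2
  refine ⟨by rw [hred]; exact psdM, hc, ?_⟩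
  -- P-matrix part
  have hA : Matrix.diagonal (D x) + Matrix.diagonal (K x) * G = Matrix.diagonal (K x) * M := by
    rw [hM, mul_add, diagonal_mul_diagonal,
      show (fun h => K x h * ((K x h)⁻¹ * D x h)) = D x from
        funext fun h => by rw [← mul_assoc, mul_inv_cancel₀ (ne_of_gt (hKpos h)), one_mul]]
  intro S
  set f : {i // i ∈ S} → Fin N := Subtype.val with hf
  show 0 < ((Matrix.diagonal (D x) + Matrix.diagonal (K x) * G).submatrix f f).det
  have hsub : ((Matrix.diagonal (D x) + Matrix.diagonal (K x) * G).submatrix f f) =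
      Matrix.diagonal (fun i : {i // i ∈ S} => K x (f i)) * (M.submatrix f f) := by
    ext i j
    simp [hA, Matrix.submatrix_apply, Matrix.diagonal_mul]
  have hMS : (M.submatrix f f).PosDef := by
    have h1 : (M.submatrix f f) =
        ((M - c • (1 : Matrix (Fin N) (Fin N) ℝ)).submatrix f f) +
          c • (1 : Matrix {i // i ∈ S} {i // i ∈ S} ℝ) := by
      ext i j
      by_cases hij : i = j
      · simp [hij, Matrix.submatrix_apply, Matrix.sub_apply, Matrix.smul_apply, Matrix.one_apply]
      · have hval : f i ≠ f j := fun hh => hij (Subtype.ext hh)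
        simp [hij, hval, Matrix.submatrix_apply, Matrix.sub_apply, Matrix.smul_apply,
          Matrix.one_apply]
    rw [h1]
    refine Matrix.PosDef.posSemidef_add (psdM.submatrix f) ?_
    have : c • (1 : Matrix {i // i ∈ S} {i // i ∈ S} ℝ) =
        Matrix.diagonal (fun _ : {i // i ∈ S} => c) := by
      ext i j
      by_cases hij : i = j <;> simp [hij, Matrix.one_apply, Matrix.diagonal]
    rw [this]
    exact Matrix.posDef_diagonal_iff.mpr fun _ => hc
  rw [hsub, Matrix.det_mul, Matrix.det_diagonal]
  exact mul_pos (Finset.prod_pos fun i _ => hKpos _) hMS.det_pos
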